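/- arXiv:1304.0840 — 5 statements merged into one kernel-verified Lean document; each statement's English description precedes it below -/
import Mathlib

section
/- Let X be an n×n real symmetric positive semidefinite matrix with trace(X) = η > 0. Then ‖X‖_F = η if and only if there exists a vector x ∈ ℝⁿ with X = x xᵀ and ‖x‖₂² = η. -/
open Matrix

/-- Frobenius norm of a real square matrix: `‖X‖_F = sqrt (trace (Xᵀ * X))`. -/
noncomputable def frobNorm {n : ℕ} (X : Matrix (Fin n) (Fin n) ℝ) : ℝ :=
  Real.sqrt (Matrix.trace (Xᵀ * X))

lemma aux_cross_zero {n : ℕ} (f : Fin n → ℝ) (hf : ∀ i, 0 ≤ f i)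
    (h : (∑ i, f i) ^ 2 = ∑ i, (f i) ^ 2) {k j : Fin n} (hj : j ≠ k) (hk : 0 < f k) :
    f j = 0 := by
  have expand : ∑ i, ∑ l ∈ Finset.univ.erase i, f i * f l = 0 := by
    have h1 : (∑ i, f i) * (∑ l, f l) = ∑ i, ∑ l, f i * f l :=
      Finset.sum_mul_sum _ _ _ _
    have h2 : ∀ i : Fin n, ∑ l, f i * f l
        = f i * f i + ∑ l ∈ Finset.univ.erase i, f i * f l := by
      intro i
      rw [← Finset.add_sum_erase _ _ (Finset.mem_univ i)]
    have h3 : (∑ i, f i) ^ 2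
        = ∑ i, (f i) ^ 2 + ∑ i, ∑ l ∈ Finset.univ.erase i, f i * f l := by
      rw [sq, h1]
      rw [Finset.sum_congr rfl (fun i _ => h2 i), Finset.sum_add_distrib]
      ring_nf
    linarith [h3, h]
  have hterm : ∀ i : Fin n, 0 ≤ ∑ l ∈ Finset.univ.erase i, f i * f l := by
    intro i
    exact Finset.sum_nonneg fun l _ => mul_nonneg (hf i) (hf l)
  have hk0 : ∑ l ∈ Finset.univ.erase k, f k * f l = 0 :=
    (Finset.sum_eq_zero_iff_of_nonneg (fun i _ => hterm i)).mp expand k (Finset.mem_univ k)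
  have hkj : f k * f j = 0 :=
    (Finset.sum_eq_zero_iff_of_nonneg
      (fun l _ => mul_nonneg (hf k) (hf l))).mp hk0 j
      (Finset.mem_erase.mpr ⟨hj, Finset.mem_univ j⟩)
  rcases mul_eq_zero.mp hkj with h | h
  · exact absurd h (ne_of_gt hk)
  · exact h

/-- for a real symmetric positive semidefinite matrix with trace η > 0,
the Frobenius norm equals η iff X = x xᵀ for some vector x with ‖x‖₂² = η. -/
theorem frobNorm_eq_trace_iff_outer_product {n : ℕ} (η : ℝ) (hη : 0 < η)
    (X : Matrix (Fin n) (Fin n) ℝ) (hX : X.PosSemidef) (htr : X.trace = η) :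
    frobNorm X = η ↔ ∃ x : Fin n → ℝ, X = Matrix.vecMulVec x x ∧ ∑ i, (x i) ^ 2 = η := by
  have hXt : Xᵀ = X := hX.1
  constructor
  · intro hfrob
    -- spectral decomposition
    have hH := hX.1
    set U : Matrix (Fin n) (Fin n) ℝ := (hH.eigenvectorUnitary : Matrix (Fin n) (Fin n) ℝ)
      with hU
    set lam := hH.eigenvalues with hlam
    have hspec : X = U * Matrix.diagonal (RCLike.ofReal ∘ lam) * star U := hH.spectral_theorem
    have hUU : star U * U = 1 := Unitary.coe_star_mul_self hH.eigenvectorUnitary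
    have hdiag : ∀ g : Fin n → ℝ, (U * Matrix.diagonal g * star U).trace = ∑ i, g i := by
      intro g
      rw [Matrix.trace_mul_cycle, hUU, Matrix.one_mul, Matrix.trace_diagonal]
    have hlamid : (RCLike.ofReal ∘ lam : Fin n → ℝ) = lam := by
      funext i; simp [RCLike.ofReal]
    have htr' : ∑ i, lam i = η := by
      have := hdiag lam
      rw [hlamid] at hspec
      rw [← hspec] at this
      rw [← this, htr]
    -- trace of X^2
    have hsq : X * X = U * Matrix.diagonal (fun i => (lam i) ^ 2) * star U := by
      rw [hlamid] at hspec
      rw [hspec]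
      calc U * Matrix.diagonal lam * star U * (U * Matrix.diagonal lam * star U)
          = U * Matrix.diagonal lam * (star U * U) * Matrix.diagonal lam * star U := by
            simp only [Matrix.mul_assoc]
        _ = U * (Matrix.diagonal lam * Matrix.diagonal lam) * star U := by
            rw [hUU]; simp only [Matrix.mul_one, Matrix.mul_assoc]
        _ = U * Matrix.diagonal (fun i => (lam i) ^ 2) * star U := by
            rw [Matrix.diagonal_mul_diagonal]
            congr 1
            · congr 1; funext i; ring
    have htrsq : (Xᵀ * X).trace = ∑ i, (lam i) ^ 2 := by
      rw [hXt, hsq, hdiag]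
    -- from frobNorm X = η deduce sum of squares = η²
    have hnn : 0 ≤ (Xᵀ * X).trace := by
      rw [htrsq]; exact Finset.sum_nonneg fun i _ => sq_nonneg _
    have hsumeq : (∑ i, lam i) ^ 2 = ∑ i, (lam i) ^ 2 := by
      have : Real.sqrt ((Xᵀ * X).trace) = η := hfrob
      have h2 : (Xᵀ * X).trace = η ^ 2 := by
        have := congrArg (fun t => t ^ 2) this
        simpa [Real.sq_sqrt hnn] using this
      rw [htr', ← htrsq, h2]
    have hlnn : ∀ i, 0 ≤ lam i := fun i => hX.eigenvalues_nonneg i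
    -- find the nonzero eigenvalue index
    have hsne : ∑ i, lam i ≠ 0 := by rw [htr']; exact ne_of_gt hη
    obtain ⟨k, _, hk0⟩ := Finset.exists_ne_zero_of_sum_ne_zero hsne
    have hkpos : 0 < lam k := lt_of_le_of_ne (hlnn k) (Ne.symm hk0)
    have hzero : ∀ j, j ≠ k → lam j = 0 := fun j hj =>
      aux_cross_zero lam hlnn hsumeq hj hkpos
    have hlamk : lam k = η := by
      rw [← htr', ← Finset.add_sum_erase _ _ (Finset.mem_univ k)]
      rw [Finset.sum_eq_zero (fun j hjm => hzero j (Finset.mem_erase.mp hjm).1), add_zero]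
    refine ⟨fun i => Real.sqrt η * U i k, ?_, ?_⟩
    · ext i j
      rw [hlamid] at hspec
      rw [hspec]
      rw [Matrix.vecMulVec_apply]
      rw [Matrix.mul_apply]
      have : ∀ a : Fin n, (U * Matrix.diagonal lam) i a * (star U) a j
          = U i a * lam a * U j a := by
        intro a
        rw [Matrix.mul_apply, Matrix.star_apply, star_trivial,
          Finset.sum_eq_single a (fun b _ hb => by simp [Matrix.diagonal_apply_ne _ hb])
          (fun h => absurd (Finset.mem_univ a) h), Matrix.diagonal_apply_eq]
      rw [Finset.sum_congr rfl fun a _ => this a]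
      rw [Finset.sum_eq_single k (fun b _ hb => by rw [hzero b hb]; ring)
        (fun h => absurd (Finset.mem_univ k) h)]
      rw [hlamk,
        show Real.sqrt η * U i k * (Real.sqrt η * U j k)
          = Real.sqrt η * Real.sqrt η * (U i k * U j k) from by ring,
        Real.mul_self_sqrt hη.le]
      ring
    · have hcol : ∑ i, (U i k) ^ 2 = 1 := by
        have := congrArg (fun M => M k k) hUU
        simp only [Matrix.mul_apply, Matrix.one_apply_eq, Matrix.star_apply, star_trivial] at this
        rw [← this]
        exact Finset.sum_congr rfl fun i _ => by ring
      have : ∑ i, (Real.sqrt η * U i k) ^ 2 = η * ∑ i, (U i k) ^ 2 := by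
        rw [Finset.mul_sum]
        exact Finset.sum_congr rfl fun i _ => by
          rw [mul_pow, Real.sq_sqrt hη.le]
      rw [this, hcol, mul_one]
  · rintro ⟨x, hx, hsum⟩
    have htrXX : (Xᵀ * X).trace = η ^ 2 := by
      rw [hXt, hx]
      rw [Matrix.trace]
      have : ∀ i : Fin n, (Matrix.vecMulVec x x * Matrix.vecMulVec x x).diag i
          = x i ^ 2 * ∑ j, x j ^ 2 := by
        intro i
        simp only [Matrix.diag_apply, Matrix.mul_apply, Matrix.vecMulVec_apply]
        rw [Finset.mul_sum]
        exact Finset.sum_congr rfl fun j _ => by ring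
      rw [Finset.sum_congr rfl fun i _ => this i, hsum, ← Finset.sum_mul, hsum]
      ring
    rw [frobNorm, htrXX]
    rw [Real.sqrt_sq hη.le]
end

section
/- Let X be an n×n real symmetric matrix and let X₊ be its positive part. Then for every n×n real symmetric positive semidefinite matrix Y, ‖X₊ − X‖_F ≤ ‖Y − X‖_F; that is, X₊ is the Euclidean (Frobenius-norm) projection of X onto the cone of positive semidefinite matrices. -/
open Matrix

/-- The positive part `X₊ = ∑_{λᵢ > 0} λᵢ pᵢ pᵢᵀ` of a real symmetric matrix `X`,
built from an orthonormal eigenbasis `pᵢ` with eigenvalues `λᵢ` (junk value `0` if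
`X` is not symmetric). -/
noncomputable def matPosPart {n : ℕ} (X : Matrix (Fin n) (Fin n) ℝ) :
    Matrix (Fin n) (Fin n) ℝ :=
  if hX : X.IsHermitian then
    ∑ i, if 0 < hX.eigenvalues i then
      hX.eigenvalues i •
        Matrix.vecMulVec (fun j => hX.eigenvectorBasis i j) (fun j => hX.eigenvectorBasis i j)
    else 0
  else 0

/-- The negative part `X₋ = ∑_{λᵢ < 0} λᵢ pᵢ pᵢᵀ` of a real symmetric matrix `X`
(junk value `0` if `X` is not symmetric). -/
noncomputable def matNegPart {n : ℕ} (X : Matrix (Fin n) (Fin n) ℝ) :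
    Matrix (Fin n) (Fin n) ℝ :=
  if hX : X.IsHermitian then
    ∑ i, if hX.eigenvalues i < 0 then
      hX.eigenvalues i •
        Matrix.vecMulVec (fun j => hX.eigenvectorBasis i j) (fun j => hX.eigenvectorBasis i j)
    else 0
  else 0

lemma real_transpose_eq_star {n : ℕ} (A : Matrix (Fin n) (Fin n) ℝ) : Aᵀ = star A :=
  ((Matrix.star_eq_conjTranspose A).trans
    (Matrix.conjTranspose_eq_transpose_of_trivial A)).symm

lemma frobNorm_eq_sqrt_sum {n : ℕ} (M : Matrix (Fin n) (Fin n) ℝ) :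
    frobNorm M = Real.sqrt (∑ j, ∑ i, (M i j)^2) := by
  unfold frobNorm
  congr 1
  simp [Matrix.trace, Matrix.diag, Matrix.mul_apply, sq]

lemma frobNorm_unitary_conj {n : ℕ} (M : Matrix (Fin n) (Fin n) ℝ)
    (U : Matrix.unitaryGroup (Fin n) ℝ) :
    frobNorm ((star (U : Matrix (Fin n) (Fin n) ℝ)) * M * (U : Matrix (Fin n) (Fin n) ℝ))
      = frobNorm M := by
  set Uc : Matrix (Fin n) (Fin n) ℝ := (U : Matrix (Fin n) (Fin n) ℝ) with hUc
  have hUU : Uc * star Uc = 1 := Matrix.mem_unitaryGroup_iff.mp U.2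
  have hUU' : star Uc * Uc = 1 := Matrix.mem_unitaryGroup_iff'.mp U.2
  unfold frobNorm
  congr 1
  have key : (star Uc * M * Uc)ᵀ * (star Uc * M * Uc) = star Uc * (Mᵀ * M) * Uc := by
    rw [real_transpose_eq_star (star Uc * M * Uc), real_transpose_eq_star M]
    simp only [Matrix.star_mul, star_star]
    simp only [Matrix.mul_assoc]
    rw [← Matrix.mul_assoc Uc (star Uc), hUU, Matrix.one_mul]
  rw [key, Matrix.trace_mul_cycle, hUU, Matrix.one_mul]

lemma sum_smul_vecMulVec {n : ℕ} {X : Matrix (Fin n) (Fin n) ℝ} (hX : X.IsHermitian)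
    (c : Fin n → ℝ) :
    (∑ i, c i • Matrix.vecMulVec (fun j => hX.eigenvectorBasis i j)
        (fun j => hX.eigenvectorBasis i j))
      = (hX.eigenvectorUnitary : Matrix (Fin n) (Fin n) ℝ) * Matrix.diagonal c
          * star (hX.eigenvectorUnitary : Matrix (Fin n) (Fin n) ℝ) := by
  ext j k
  simp only [Matrix.sum_apply, Matrix.smul_apply, Matrix.vecMulVec_apply, Matrix.mul_apply,
    Matrix.diagonal_apply, Matrix.star_apply, star_trivial, smul_eq_mul]
  apply Finset.sum_congr rfl
  intro i _
  rw [Finset.sum_eq_single i]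
  · rw [if_pos rfl, Matrix.IsHermitian.eigenvectorUnitary_apply,
      Matrix.IsHermitian.eigenvectorUnitary_apply]
    show c i * (hX.eigenvectorBasis i j * hX.eigenvectorBasis i k)
      = hX.eigenvectorBasis i j * c i * hX.eigenvectorBasis i k
    ring
  · intro b _ hb
    simp [hb]
  · intro h; exact absurd (Finset.mem_univ i) h

lemma frobNorm_diagonal {n : ℕ} (d : Fin n → ℝ) :
    frobNorm (Matrix.diagonal d) = Real.sqrt (∑ i, (d i)^2) := by
  rw [frobNorm_eq_sqrt_sum]
  congr 1
  apply Finset.sum_congr rfl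
  intro j _
  rw [Finset.sum_eq_single j]
  · simp
  · intro b _ hb; simp [Matrix.diagonal_apply_ne _ hb]
  · intro h; exact absurd (Finset.mem_univ j) h

/-- the positive part X₊ of a real symmetric matrix X is the Frobenius-norm
projection of X onto the positive semidefinite cone: for every symmetric p.s.d. Y,
‖X₊ − X‖_F ≤ ‖Y − X‖_F. -/
theorem matPosPart_is_projection {n : ℕ}
    (X : Matrix (Fin n) (Fin n) ℝ) (hX : X.IsHermitian) :
    ∀ Y : Matrix (Fin n) (Fin n) ℝ, Y.PosSemidef →
      frobNorm (matPosPart X - X) ≤ frobNorm (Y - X) := by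
  intro Y hY
  set U := hX.eigenvectorUnitary with hU
  set Uc : Matrix (Fin n) (Fin n) ℝ := (U : Matrix (Fin n) (Fin n) ℝ) with hUcdef
  have hUU : Uc * star Uc = 1 := Matrix.mem_unitaryGroup_iff.mp U.2
  have hUU' : star Uc * Uc = 1 := Matrix.mem_unitaryGroup_iff'.mp U.2
  set lam := hX.eigenvalues with hlam
  set c : Fin n → ℝ := fun i => if 0 < lam i then lam i else 0 with hc
  have hPos : matPosPart X = Uc * Matrix.diagonal c * star Uc := by
    rw [matPosPart, dif_pos hX, ← sum_smul_vecMulVec hX c]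
    apply Finset.sum_congr rfl
    intro i _
    by_cases h : 0 < lam i
    · rw [if_pos h, hc]; simp [h]; rfl
    · rw [if_neg h, hc]; simp [h]
  have hXeq : X = Uc * Matrix.diagonal lam * star Uc := by
    have := hX.spectral_theorem
    simpa [RCLike.ofReal_real_eq_id] using this
  have hdiff : matPosPart X - X = Uc * Matrix.diagonal (fun i => c i - lam i) * star Uc := by
    rw [hPos]
    conv_lhs => rw [hXeq]
    rw [← Matrix.diagonal_sub, Matrix.mul_sub, Matrix.sub_mul]
  -- transform Y
  set Z : Matrix (Fin n) (Fin n) ℝ := star Uc * Y * Uc with hZ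
  have hZpsd : Z.PosSemidef := by
    rw [hZ, Matrix.star_eq_conjTranspose]
    exact hY.conjTranspose_mul_mul_same Uc
  have hZdiag : ∀ i, 0 ≤ Z i i := by
    intro i
    have := hZpsd.dotProduct_mulVec_nonneg (Pi.single i 1)
    simpa [Matrix.mulVec_single, dotProduct, Pi.single_apply] using this
  have hYX : star Uc * (Y - X) * Uc = Z - Matrix.diagonal lam := by
    rw [Matrix.mul_sub, Matrix.sub_mul, hXeq]
    congr 1
    simp only [Matrix.mul_assoc]
    rw [hUU', Matrix.mul_one, ← Matrix.mul_assoc, hUU', Matrix.one_mul]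
  -- compute both frobenius norms
  have hL : frobNorm (matPosPart X - X) = Real.sqrt (∑ i, (c i - lam i)^2) := by
    rw [hdiff, ← frobNorm_diagonal (fun i => c i - lam i)]
    have := frobNorm_unitary_conj (Matrix.diagonal (fun i => c i - lam i)) (star U)
    rw [show ((star U : Matrix.unitaryGroup (Fin n) ℝ) : Matrix (Fin n) (Fin n) ℝ)
        = star Uc from rfl, star_star] at this
    exact this
  have hR : frobNorm (Y - X) = frobNorm (Z - Matrix.diagonal lam) := by
    rw [← hYX, frobNorm_unitary_conj]
  rw [hL, hR, frobNorm_eq_sqrt_sum]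
  apply Real.sqrt_le_sqrt
  calc ∑ i, (c i - lam i)^2
      ≤ ∑ j, ((Z - Matrix.diagonal lam) j j)^2 := by
        apply Finset.sum_le_sum
        intro j _
        have hzj : (Z - Matrix.diagonal lam) j j = Z j j - lam j := by
          simp [Matrix.sub_apply]
        rw [hzj]
        by_cases h : 0 < lam j
        · simp only [hc, if_pos h, sub_self]
          simpa using sq_nonneg (Z j j - lam j)
        · simp only [hc, if_neg h, zero_sub, neg_sq]
          push_neg at h
          have h1 : -lam j ≤ Z j j - lam j := by linarith [hZdiag j]
          have h0 : 0 ≤ -lam j := by linarith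
          calc (lam j)^2 = (-lam j)^2 := by ring
            _ ≤ (Z j j - lam j)^2 := by
              apply pow_le_pow_left₀ h0 h1
    _ ≤ ∑ j, ∑ i, ((Z - Matrix.diagonal lam) i j)^2 := by
        apply Finset.sum_le_sum
        intro j _
        exact Finset.single_le_sum (f := fun i => ((Z - Matrix.diagonal lam) i j)^2)
          (fun i _ => sq_nonneg _) (Finset.mem_univ j)
end

section
/- Let X be an n×n real symmetric matrix and let X₊ be its positive part, with Y any n×n real symmetric positive semidefinite matrix satisfying ‖Y − X‖_F = ‖X₊ − X‖_F. Then Y = X₊; i.e., the minimizer of ‖Y − X‖_F² over the positive semidefinite cone is unique. -/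
open Matrix

private lemma trace_tmul_nonneg {n : ℕ} (A : Matrix (Fin n) (Fin n) ℝ) :
    0 ≤ Matrix.trace (Aᵀ * A) := by
  simp only [Matrix.trace, Matrix.diag, Matrix.mul_apply, Matrix.transpose_apply]
  exact Finset.sum_nonneg fun i _ => Finset.sum_nonneg fun j _ => mul_self_nonneg _

private lemma eq_zero_of_trace_tmul {n : ℕ} {A : Matrix (Fin n) (Fin n) ℝ}
    (h : Matrix.trace (Aᵀ * A) = 0) : A = 0 := by
  have hsum : (∑ i, ∑ j, A j i * A j i) = 0 := by
    simpa [Matrix.trace, Matrix.diag, Matrix.mul_apply, Matrix.transpose_apply] using h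
  ext a b
  have h1 := (Finset.sum_eq_zero_iff_of_nonneg
    (fun i _ => Finset.sum_nonneg fun j _ => mul_self_nonneg (A j i))).mp hsum b (Finset.mem_univ b)
  have h2 := (Finset.sum_eq_zero_iff_of_nonneg
    (fun j _ => mul_self_nonneg (A j b))).mp h1 a (Finset.mem_univ a)
  simpa using mul_self_eq_zero.mp h2

private lemma trace_nonneg_of_psd {n : ℕ} {A : Matrix (Fin n) (Fin n) ℝ}
    (hA : A.PosSemidef) : 0 ≤ A.trace := by
  refine Finset.sum_nonneg fun i _ => ?_
  have := hA.dotProduct_mulVec_nonneg (Pi.single i 1)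
  simpa [dotProduct, Matrix.mulVec, Pi.single_apply] using this

open scoped MatrixOrder in
private lemma trace_mul_nonneg' {n : ℕ} {A B : Matrix (Fin n) (Fin n) ℝ}
    (hA : A.PosSemidef) (hB : B.PosSemidef) : 0 ≤ (A * B).trace := by
  have hS := (CFC.sqrt_nonneg A).posSemidef
  have h1 : A * B = CFC.sqrt A * (CFC.sqrt A * B) := by
    rw [← mul_assoc, CFC.sqrt_mul_sqrt_self A hA.nonneg]
  rw [h1, Matrix.trace_mul_comm]
  have h2 := hB.conjTranspose_mul_mul_same (CFC.sqrt A)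
  rw [hS.1] at h2
  exact trace_nonneg_of_psd h2

private lemma vecMulVec_mul_vecMulVec {n : ℕ} (u v w z : Fin n → ℝ) :
    Matrix.vecMulVec u v * Matrix.vecMulVec w z = (v ⬝ᵥ w) • Matrix.vecMulVec u z := by
  ext a b
  simp only [Matrix.mul_apply, Matrix.vecMulVec_apply, Matrix.smul_apply, dotProduct,
    smul_eq_mul, Finset.sum_mul]
  exact Finset.sum_congr rfl fun k _ => by ring

private lemma eigenbasis_dot {n : ℕ} {X : Matrix (Fin n) (Fin n) ℝ} (hX : X.IsHermitian)
    (i j : Fin n) :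
    (fun k => hX.eigenvectorBasis i k) ⬝ᵥ (fun k => hX.eigenvectorBasis j k)
      = if i = j then 1 else 0 := by
  have h := orthonormal_iff_ite.mp hX.eigenvectorBasis.orthonormal i j
  simpa [PiLp.inner_apply, RCLike.inner_apply, dotProduct, mul_comm] using h

private lemma spectral_sum {n : ℕ} {X : Matrix (Fin n) (Fin n) ℝ} (hX : X.IsHermitian) :
    X = ∑ i, hX.eigenvalues i •
      Matrix.vecMulVec (fun j => hX.eigenvectorBasis i j) (fun j => hX.eigenvectorBasis i j) := by
  ext a b
  conv_lhs => rw [hX.spectral_theorem]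
  simp only [Matrix.sum_apply, Matrix.smul_apply, Matrix.vecMulVec_apply, smul_eq_mul,
    Matrix.mul_apply, Matrix.diagonal_apply, Matrix.conjTranspose_apply, star_trivial,
    Matrix.IsHermitian.eigenvectorUnitary_apply, Matrix.star_apply, star_trivial,
    Function.comp_apply, RCLike.ofReal_real_eq_id, id_eq, mul_ite, mul_zero,
    Finset.sum_ite_eq, Finset.sum_ite_eq', Finset.mem_univ, if_pos, Unitary.conjStarAlgAut_apply]
  exact Finset.sum_congr rfl fun k _ => by ring

private lemma posSemidef_smul_vecMulVec {n : ℕ} {c : ℝ} (hc : 0 ≤ c) (v : Fin n → ℝ) :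
    (c • Matrix.vecMulVec v v).PosSemidef := by
  refine Matrix.PosSemidef.of_dotProduct_mulVec_nonneg ?_ ?_
  · ext a b
    simp only [Matrix.conjTranspose_apply, Matrix.smul_apply, Matrix.vecMulVec_apply,
      star_trivial, smul_eq_mul]
    ring
  · intro x
    have key : star x ⬝ᵥ ((c • Matrix.vecMulVec v v) *ᵥ x) = c * (∑ a, v a * x a) ^ 2 := by
      simp only [star_trivial, dotProduct, Matrix.mulVec, Matrix.smul_apply,
        Matrix.vecMulVec_apply, smul_eq_mul]
      rw [sq, Finset.sum_mul_sum, Finset.mul_sum]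
      refine Finset.sum_congr rfl fun a _ => ?_
      rw [Finset.mul_sum, Finset.mul_sum]
      exact Finset.sum_congr rfl fun b _ => by ring
    rw [key]
    positivity

/-- the Frobenius-norm projection of a real symmetric matrix X onto the
positive semidefinite cone is unique: any symmetric p.s.d. Y with
‖Y − X‖_F = ‖X₊ − X‖_F must equal X₊. -/
theorem matPosPart_projection_unique {n : ℕ}
    (X : Matrix (Fin n) (Fin n) ℝ) (hX : X.IsHermitian)
    (Y : Matrix (Fin n) (Fin n) ℝ) (hY : Y.PosSemidef)
    (heq : frobNorm (Y - X) = frobNorm (matPosPart X - X)) :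
    Y = matPosPart X := by
  classical
  have hXPN : X = matPosPart X + matNegPart X := by
    rw [matPosPart, matNegPart, dif_pos hX, dif_pos hX, ← Finset.sum_add_distrib]
    conv_lhs => rw [spectral_sum hX]
    refine Finset.sum_congr rfl fun i _ => ?_
    rcases lt_trichotomy (hX.eigenvalues i) 0 with h|h|h
    · rw [if_neg (by linarith), if_pos h, zero_add]
    · rw [if_neg (by simp [h]), if_neg (by simp [h]), h, zero_smul, add_zero]
    · rw [if_pos h, if_neg (by linarith), add_zero]
  have hPsd : (matPosPart X).PosSemidef := by
    rw [matPosPart, dif_pos hX]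
    refine Finset.sum_induction _ _ (fun a b ha hb => ha.add hb) .zero (fun i _ => ?_)
    split_ifs with h
    · exact posSemidef_smul_vecMulVec h.le _
    · exact .zero
  have hNsd : (-matNegPart X).PosSemidef := by
    rw [matNegPart, dif_pos hX, ← Finset.sum_neg_distrib]
    refine Finset.sum_induction _ _ (fun a b ha hb => ha.add hb) .zero (fun i _ => ?_)
    split_ifs with h
    · rw [← neg_smul]; exact posSemidef_smul_vecMulVec (by linarith) _
    · simpa using Matrix.PosSemidef.zero
  have hPN : matPosPart X * matNegPart X = 0 := by
    rw [matPosPart, matNegPart, dif_pos hX, dif_pos hX, Finset.sum_mul_sum]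
    refine Finset.sum_eq_zero fun i _ => Finset.sum_eq_zero fun j _ => ?_
    split_ifs with h1 h2
    · have hij : i ≠ j := fun e => by rw [e] at h1; linarith
      rw [Matrix.smul_mul, Matrix.mul_smul, vecMulVec_mul_vecMulVec, eigenbasis_dot hX,
        if_neg hij, zero_smul, smul_zero, smul_zero]
    all_goals simp
  have h1 : Matrix.trace ((Y - X)ᵀ * (Y - X))
      = Matrix.trace ((matPosPart X - X)ᵀ * (matPosPart X - X)) := by
    have h := congrArg (fun t : ℝ => t ^ 2) heq
    simp only [frobNorm] at h
    rwa [Real.sq_sqrt (trace_tmul_nonneg _), Real.sq_sqrt (trace_tmul_nonneg _)] at h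
  set P := matPosPart X with hPdef
  set N := matNegPart X with hNdef
  have hB : P - X = -N := by rw [hXPN]; abel
  have hexp : Matrix.trace ((Y - X)ᵀ * (Y - X)) =
      Matrix.trace ((Y - P)ᵀ * (Y - P)) + 2 * Matrix.trace ((Y - P)ᵀ * (P - X))
        + Matrix.trace ((P - X)ᵀ * (P - X)) := by
    have hdecomp : Y - X = (Y - P) + (P - X) := by abel
    rw [hdecomp, Matrix.transpose_add, Matrix.add_mul, Matrix.mul_add, Matrix.mul_add,
      Matrix.trace_add, Matrix.trace_add, Matrix.trace_add]
    have hcomm : Matrix.trace ((P - X)ᵀ * (Y - P)) = Matrix.trace ((Y - P)ᵀ * (P - X)) := by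
      rw [← Matrix.trace_transpose ((P - X)ᵀ * (Y - P)), Matrix.transpose_mul,
        Matrix.transpose_transpose]
    rw [hcomm]; ring
  have hYh : Yᵀ = Y := by
    rw [← Matrix.conjTranspose_eq_transpose_of_trivial Y]; exact hY.1
  have hPh : Pᵀ = P := by
    rw [← Matrix.conjTranspose_eq_transpose_of_trivial P]; exact hPsd.1
  have hcross : 0 ≤ Matrix.trace ((Y - P)ᵀ * (P - X)) := by
    rw [hB, Matrix.transpose_sub, hYh, hPh, Matrix.sub_mul, Matrix.trace_sub]
    have h2 : P * -N = 0 := by rw [Matrix.mul_neg, hPN, neg_zero]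
    rw [h2, Matrix.trace_zero, sub_zero]
    exact trace_mul_nonneg' hY hNsd
  have hle : Matrix.trace ((Y - P)ᵀ * (Y - P)) ≤ 0 := by linarith
  have hzero : Y - P = 0 := eq_zero_of_trace_tmul (le_antisymm hle (trace_tmul_nonneg _))
  exact sub_eq_zero.mp hzero
end

section
/- Let X be an n×n real symmetric matrix. Then the squared Frobenius distance from X to the cone of positive semidefinite symmetric matrices equals ‖X₋‖_F², i.e., inf over symmetric Y ⪰ 0 of ‖Y − X‖_F² equals ‖X₋‖_F². -/
open Matrix

section Aux
variable {n : ℕ}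

lemma aux_complete (p : Fin n → Fin n → ℝ)
    (h : ∀ i j, (∑ k, p i k * p j k) = if i = j then (1:ℝ) else 0) :
    ∀ k l, (∑ i, p i k * p i l) = if k = l then (1:ℝ) else 0 := by
  have h1 : (Matrix.of p) * (Matrix.of p)ᵀ = 1 := by
    ext i j
    simpa [Matrix.mul_apply, Matrix.one_apply] using h i j
  have h2 : (Matrix.of p)ᵀ * (Matrix.of p) = 1 := mul_eq_one_comm.mp h1
  intro k l
  have := congrFun (congrFun h2 k) l
  simpa [Matrix.mul_apply, Matrix.one_apply] using this

lemma aux_trace (M : Matrix (Fin n) (Fin n) ℝ) :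
    Matrix.trace (Mᵀ * M) = ∑ l, ∑ k, (M k l)^2 := by
  simp [Matrix.trace, Matrix.mul_apply, Matrix.diag, sq]

lemma aux_conj_entry (p : Fin n → Fin n → ℝ) (M : Matrix (Fin n) (Fin n) ℝ) (i j : Fin n) :
    ((Matrix.of p) * M * (Matrix.of p)ᵀ) i j = ∑ k, p i k * ∑ l, M k l * p j l := by
  simp only [Matrix.mul_apply, Matrix.transpose_apply, Matrix.of_apply, Finset.sum_mul,
    Finset.mul_sum]
  rw [Finset.sum_comm]
  exact Finset.sum_congr rfl fun k _ => Finset.sum_congr rfl fun l _ => by ring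

lemma aux_trace_conj (p : Fin n → Fin n → ℝ)
    (h : ∀ i j, (∑ k, p i k * p j k) = if i = j then (1:ℝ) else 0)
    (M : Matrix (Fin n) (Fin n) ℝ) :
    Matrix.trace ((((Matrix.of p) * M * (Matrix.of p)ᵀ))ᵀ * ((Matrix.of p) * M * (Matrix.of p)ᵀ))
      = Matrix.trace (Mᵀ * M) := by
  have h1 : (Matrix.of p) * (Matrix.of p)ᵀ = 1 := by
    ext i j
    simpa [Matrix.mul_apply, Matrix.one_apply] using h i j
  have h2 : (Matrix.of p)ᵀ * (Matrix.of p) = 1 := mul_eq_one_comm.mp h1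
  set P := Matrix.of p
  calc Matrix.trace ((P * M * Pᵀ)ᵀ * (P * M * Pᵀ))
      = Matrix.trace (P * Mᵀ * (Pᵀ * P) * M * Pᵀ) := by
        simp only [Matrix.transpose_mul, Matrix.transpose_transpose, Matrix.mul_assoc]
    _ = Matrix.trace (Mᵀ * M) := by
        rw [h2, Matrix.mul_one, Matrix.trace_mul_cycle, ← Matrix.mul_assoc, h2, Matrix.one_mul]

lemma aux_B_diag (p : Fin n → Fin n → ℝ) (c : Fin n → ℝ)
    (h : ∀ i j, (∑ k, p i k * p j k) = if i = j then (1:ℝ) else 0) (i j : Fin n) :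
    (∑ k, p i k * ∑ l, (∑ m, c m * (p m k * p m l)) * p j l) = if i = j then c i else 0 := by
  have inner : ∀ k, (∑ l, (∑ m, c m * (p m k * p m l)) * p j l) = c j * p j k := by
    intro k
    have : ∀ l, (∑ m, c m * (p m k * p m l)) * p j l
        = ∑ m, c m * p m k * (p m l * p j l) := by
      intro l
      rw [Finset.sum_mul]
      exact Finset.sum_congr rfl fun m _ => by ring
    rw [Finset.sum_congr rfl fun l _ => this l, Finset.sum_comm]
    have : ∀ m, (∑ l, c m * p m k * (p m l * p j l)) = c m * p m k * (if m = j then (1:ℝ) else 0) := by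
      intro m
      rw [← Finset.mul_sum, h m j]
    rw [Finset.sum_congr rfl fun m _ => this m]
    simp [Finset.sum_ite_eq]
  rw [Finset.sum_congr rfl fun k _ => by rw [inner k]]
  have : (∑ k, p i k * (c j * p j k)) = c j * ∑ k, p i k * p j k := by
    rw [Finset.mul_sum]
    exact Finset.sum_congr rfl fun k _ => by ring
  rw [this, h i j]
  by_cases hij : i = j <;> simp [hij]

lemma aux_quadform (p : Fin n → Fin n → ℝ) (c x : Fin n → ℝ) :
    (∑ k, x k * ∑ l, (∑ i, c i * (p i k * p i l)) * x l)
      = ∑ i, c i * (∑ k, p i k * x k)^2 := by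
  calc (∑ k, x k * ∑ l, (∑ i, c i * (p i k * p i l)) * x l)
      = ∑ k, ∑ l, ∑ i, c i * (p i k * x k) * (p i l * x l) := by
        refine Finset.sum_congr rfl fun k _ => ?_
        rw [Finset.mul_sum]
        refine Finset.sum_congr rfl fun l _ => ?_
        rw [Finset.sum_mul, Finset.mul_sum]
        exact Finset.sum_congr rfl fun i _ => by ring
    _ = ∑ i, ∑ k, ∑ l, c i * (p i k * x k) * (p i l * x l) := by
        rw [Finset.sum_congr rfl fun k (_ : k ∈ Finset.univ) =>
          (Finset.sum_comm (s := Finset.univ) (t := Finset.univ)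
            (f := fun l i => c i * (p i k * x k) * (p i l * x l)))]
        exact Finset.sum_comm
    _ = ∑ i, c i * (∑ k, p i k * x k)^2 := by
        refine Finset.sum_congr rfl fun i _ => ?_
        rw [sq, Finset.sum_mul_sum, Finset.mul_sum]
        refine Finset.sum_congr rfl fun k _ => ?_
        rw [Finset.mul_sum]
        exact Finset.sum_congr rfl fun l _ => by ring

end Aux

lemma eig_orth {n : ℕ} {X : Matrix (Fin n) (Fin n) ℝ} (hX : X.IsHermitian) (i j : Fin n) :
    (∑ k, hX.eigenvectorBasis i k * hX.eigenvectorBasis j k) = if i = j then (1:ℝ) else 0 := by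
  have := (orthonormal_iff_ite.mp hX.eigenvectorBasis.orthonormal) i j
  simpa [PiLp.inner_apply, RCLike.inner_apply, mul_comm] using this

lemma eig_mulvec {n : ℕ} {X : Matrix (Fin n) (Fin n) ℝ} (hX : X.IsHermitian) (i k : Fin n) :
    (∑ l, X k l * hX.eigenvectorBasis i l) = hX.eigenvalues i * hX.eigenvectorBasis i k := by
  have := congrFun (hX.mulVec_eigenvectorBasis i) k
  simpa [Matrix.mulVec, dotProduct] using this

lemma spectral_entry {n : ℕ} {X : Matrix (Fin n) (Fin n) ℝ} (hX : X.IsHermitian) (k l : Fin n) :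
    X k l = ∑ i, hX.eigenvalues i * (hX.eigenvectorBasis i k * hX.eigenvectorBasis i l) := by
  set p : Fin n → Fin n → ℝ := fun i j => hX.eigenvectorBasis i j with hp
  have hc := aux_complete p (fun i j => eig_orth hX i j)
  calc X k l = ∑ l', X k l' * (if l' = l then (1:ℝ) else 0) := by simp
    _ = ∑ l', X k l' * ∑ i, p i l' * p i l := by
        exact Finset.sum_congr rfl fun l' _ => by rw [hc l' l]
    _ = ∑ i, (∑ l', X k l' * p i l') * p i l := by
        simp only [Finset.mul_sum, Finset.sum_mul]
        rw [Finset.sum_comm]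
        exact Finset.sum_congr rfl fun i _ => Finset.sum_congr rfl fun l' _ => by ring
    _ = ∑ i, hX.eigenvalues i * (p i k * p i l) := by
        refine Finset.sum_congr rfl fun i _ => ?_
        rw [eig_mulvec hX i k]
        ring

lemma matPosPart_apply {n : ℕ} {X : Matrix (Fin n) (Fin n) ℝ} (hX : X.IsHermitian) (k l : Fin n) :
    matPosPart X k l = ∑ i, (if 0 < hX.eigenvalues i then hX.eigenvalues i else 0)
      * (hX.eigenvectorBasis i k * hX.eigenvectorBasis i l) := by
  simp only [matPosPart, dif_pos hX, Matrix.sum_apply]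
  refine Finset.sum_congr rfl fun i _ => ?_
  split_ifs with h
  · simp [Matrix.vecMulVec_apply, mul_assoc]
  · simp

lemma matNegPart_apply {n : ℕ} {X : Matrix (Fin n) (Fin n) ℝ} (hX : X.IsHermitian) (k l : Fin n) :
    matNegPart X k l = ∑ i, (if hX.eigenvalues i < 0 then hX.eigenvalues i else 0)
      * (hX.eigenvectorBasis i k * hX.eigenvectorBasis i l) := by
  simp only [matNegPart, dif_pos hX, Matrix.sum_apply]
  refine Finset.sum_congr rfl fun i _ => ?_
  split_ifs with h
  · simp [Matrix.vecMulVec_apply, mul_assoc]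
  · simp

/-- the squared Frobenius distance from a real symmetric matrix X to the
cone of positive semidefinite matrices equals ‖X₋‖_F²; i.e., ‖X₋‖_F² is the infimum
of ‖Y − X‖_F² = trace((Y − X)ᵀ (Y − X)) over symmetric Y ⪰ 0. -/
theorem sq_dist_to_psd_cone_eq_matNegPart {n : ℕ}
    (X : Matrix (Fin n) (Fin n) ℝ) (hX : X.IsHermitian) :
    IsGLB {d : ℝ | ∃ Y : Matrix (Fin n) (Fin n) ℝ, Y.PosSemidef ∧
        d = Matrix.trace ((Y - X)ᵀ * (Y - X))}
      (Matrix.trace ((matNegPart X)ᵀ * matNegPart X)) := by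
  set p : Fin n → Fin n → ℝ := fun i j => hX.eigenvectorBasis i j with hp
  set μ : Fin n → ℝ := hX.eigenvalues with hμ
  set c : Fin n → ℝ := fun i => if μ i < 0 then μ i else 0 with hc
  set cp : Fin n → ℝ := fun i => if 0 < μ i then μ i else 0 with hcp
  have horth : ∀ i j, (∑ k, p i k * p j k) = if i = j then (1:ℝ) else 0 :=
    fun i j => eig_orth hX i j
  set N : Matrix (Fin n) (Fin n) ℝ := matNegPart X with hNdef
  have hN : ∀ k l, N k l = ∑ i, c i * (p i k * p i l) := fun k l => matNegPart_apply hX k l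
  -- value of trace(NᵀN)
  have htraceN : Matrix.trace (Nᵀ * N) = ∑ i, (c i)^2 := by
    rw [← aux_trace_conj p horth N, aux_trace]
    have hB : ∀ i j, ((Matrix.of p) * N * (Matrix.of p)ᵀ) i j = if i = j then c i else 0 := by
      intro i j
      rw [aux_conj_entry]
      rw [show (∑ k, p i k * ∑ l, N k l * p j l)
          = ∑ k, p i k * ∑ l, (∑ m, c m * (p m k * p m l)) * p j l from
        Finset.sum_congr rfl fun k _ => by rw [Finset.sum_congr rfl fun l _ => by rw [hN k l]]]
      exact aux_B_diag p c horth i j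
    rw [Finset.sum_congr rfl fun l _ => Finset.sum_congr rfl fun k _ => by rw [hB k l]]
    simp [apply_ite (fun r : ℝ => r^2)]
  -- membership: Y = matPosPart X attains the value
  have hmem : Matrix.trace (Nᵀ * N) ∈ {d : ℝ | ∃ Y : Matrix (Fin n) (Fin n) ℝ, Y.PosSemidef ∧
      d = Matrix.trace ((Y - X)ᵀ * (Y - X))} := by
    refine ⟨matPosPart X, ?_, ?_⟩
    · refine Matrix.posSemidef_iff_dotProduct_mulVec.mpr ⟨?_, ?_⟩
      · ext k l
        simp only [Matrix.conjTranspose_apply, star_trivial, matPosPart_apply hX]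
        exact Finset.sum_congr rfl fun i _ => by ring
      · intro x
        have hsx : star x = x := by simp
        rw [hsx]
        have : dotProduct x ((matPosPart X) *ᵥ x)
            = ∑ k, x k * ∑ l, (∑ i, cp i * (p i k * p i l)) * x l := by
          simp only [dotProduct, Matrix.mulVec]
          refine Finset.sum_congr rfl fun k _ => ?_
          congr 1
          refine Finset.sum_congr rfl fun l _ => ?_
          rw [matPosPart_apply hX k l]
        rw [this, aux_quadform]
        refine Finset.sum_nonneg fun i _ => ?_
        have : 0 ≤ cp i := by
          simp only [hcp]; split_ifs with h
          · exact le_of_lt h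
          · exact le_refl 0
        positivity
    · have hYX : matPosPart X - X = -N := by
        ext k l
        simp only [Matrix.sub_apply, Matrix.neg_apply, matPosPart_apply hX, hN,
          spectral_entry hX k l]
        rw [← Finset.sum_sub_distrib, ← Finset.sum_neg_distrib]
        refine Finset.sum_congr rfl fun i _ => ?_
        have hci : c i = if μ i < 0 then μ i else 0 := rfl
        by_cases h1 : 0 < μ i
        · rw [if_pos h1, hci, if_neg (by linarith : ¬ μ i < 0)]; ring
        · by_cases h2 : μ i < 0
          · rw [if_neg h1, hci, if_pos h2]; ring
          · have h0 : hX.eigenvalues i = 0 := le_antisymm (not_lt.mp h1) (not_lt.mp h2)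
            rw [if_neg h1, hci, if_neg h2, h0]; ring
      rw [hYX]
      simp [Matrix.transpose_neg, Matrix.neg_mul, Matrix.mul_neg]
  -- lower bound
  have hlb : ∀ d ∈ {d : ℝ | ∃ Y : Matrix (Fin n) (Fin n) ℝ, Y.PosSemidef ∧
      d = Matrix.trace ((Y - X)ᵀ * (Y - X))}, Matrix.trace (Nᵀ * N) ≤ d := by
    rintro d ⟨Y, hY, rfl⟩
    set M : Matrix (Fin n) (Fin n) ℝ := Y - X with hM
    set B : Matrix (Fin n) (Fin n) ℝ := (Matrix.of p) * M * (Matrix.of p)ᵀ with hB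
    have hdiag : ∀ i, ∃ q : ℝ, 0 ≤ q ∧ B i i = q - μ i := by
      intro i
      refine ⟨∑ k, p i k * ∑ l, Y k l * p i l, ?_, ?_⟩
      · have := hY.dotProduct_mulVec_nonneg (p i)
        have hsp : star (p i) = p i := by simp
        rw [hsp] at this
        simpa [dotProduct, Matrix.mulVec] using this
      · rw [hB, aux_conj_entry]
        have hMX : ∀ k, (∑ l, M k l * p i l)
            = (∑ l, Y k l * p i l) - μ i * p i k := by
          intro k
          rw [hM]
          simp only [Matrix.sub_apply, sub_mul, Finset.sum_sub_distrib]
          rw [eig_mulvec hX i k]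
        rw [Finset.sum_congr rfl fun k _ => by rw [hMX k]]
        have : (∑ k, p i k * ((∑ l, Y k l * p i l) - μ i * p i k))
            = (∑ k, p i k * ∑ l, Y k l * p i l) - μ i * ∑ k, p i k * p i k := by
          rw [Finset.mul_sum, ← Finset.sum_sub_distrib]
          exact Finset.sum_congr rfl fun k _ => by ring
        rw [this, horth i i, if_pos rfl, mul_one]
    have key : ∑ i, (c i)^2 ≤ Matrix.trace (Mᵀ * M) := by
      rw [← aux_trace_conj p horth M, aux_trace]
      calc ∑ i, (c i)^2 ≤ ∑ i, (B i i)^2 := by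
            refine Finset.sum_le_sum fun i _ => ?_
            obtain ⟨q, hq0, hqi⟩ := hdiag i
            rw [hqi]
            by_cases h : μ i < 0
            · have hci : c i = μ i := if_pos h
              rw [hci]; nlinarith
            · have hci : c i = 0 := if_neg h
              rw [hci]
              simpa using sq_nonneg (q - μ i)
        _ ≤ ∑ l, ∑ k, (B k l)^2 := by
            refine Finset.sum_le_sum fun i _ => ?_
            exact Finset.single_le_sum (fun k _ => sq_nonneg (B k i))
              (Finset.mem_univ i)
    calc Matrix.trace (Nᵀ * N) = ∑ i, (c i)^2 := htraceN
      _ ≤ Matrix.trace (Mᵀ * M) := key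
  exact IsLeast.isGLB ⟨hmem, hlb⟩
end

section
/- The dual objective of SDCut is concave: fix σ > 0, symmetric matrices A, B₁, …, B_m, b ∈ ℝ^m and η ∈ ℝ, and let C(u) = A + Σᵢ uᵢ Bᵢ. Then the function g(u) = −(1/(4σ))‖C(u)₋‖_F² − uᵀb − ση² is concave on ℝ^m. -/
open Matrix

namespace SDCutAux

variable {n : ℕ}

/-- Frobenius inner product. -/
def fip (M N : Matrix (Fin n) (Fin n) ℝ) : ℝ := ∑ j, ∑ i, M i j * N i j

lemma fip_eq_trace (M N : Matrix (Fin n) (Fin n) ℝ) :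
    Matrix.trace (Mᵀ * N) = fip M N := by
  simp only [Matrix.trace, Matrix.diag, Matrix.mul_apply, Matrix.transpose_apply, fip]

lemma fip_comm (M N : Matrix (Fin n) (Fin n) ℝ) : fip M N = fip N M := by
  simp [fip, mul_comm]

lemma fip_self_nonneg (M : Matrix (Fin n) (Fin n) ℝ) : 0 ≤ fip M M :=
  Finset.sum_nonneg fun j _ => Finset.sum_nonneg fun i _ => mul_self_nonneg _

lemma fip_add_left (M M' N : Matrix (Fin n) (Fin n) ℝ) :
    fip (M + M') N = fip M N + fip M' N := by
  simp [fip, add_mul, Finset.sum_add_distrib]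

lemma fip_sub_left (M M' N : Matrix (Fin n) (Fin n) ℝ) :
    fip (M - M') N = fip M N - fip M' N := by
  simp [fip, sub_mul, Finset.sum_sub_distrib]

lemma fip_smul_left (c : ℝ) (M N : Matrix (Fin n) (Fin n) ℝ) :
    fip (c • M) N = c * fip M N := by
  simp [fip, Finset.mul_sum, mul_assoc]

lemma fip_smul_right (c : ℝ) (M N : Matrix (Fin n) (Fin n) ℝ) :
    fip M (c • N) = c * fip M N := by
  rw [fip_comm, fip_smul_left, fip_comm]

lemma fip_add_right (M N N' : Matrix (Fin n) (Fin n) ℝ) :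
    fip M (N + N') = fip M N + fip M N' := by
  rw [fip_comm, fip_add_left, fip_comm N M, fip_comm N' M]

lemma fip_sub_right (M N N' : Matrix (Fin n) (Fin n) ℝ) :
    fip M (N - N') = fip M N - fip M N' := by
  rw [fip_comm, fip_sub_left, fip_comm N M, fip_comm N' M]

lemma fip_sum_left {ι : Type*} (s : Finset ι) (f : ι → Matrix (Fin n) (Fin n) ℝ)
    (N : Matrix (Fin n) (Fin n) ℝ) :
    fip (∑ i ∈ s, f i) N = ∑ i ∈ s, fip (f i) N := by
  classical
  induction s using Finset.induction with
  | empty => simp [fip]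
  | insert a s h ih => simp [Finset.sum_insert h, fip_add_left, ih]

lemma fip_sum_right {ι : Type*} (s : Finset ι) (M : Matrix (Fin n) (Fin n) ℝ)
    (f : ι → Matrix (Fin n) (Fin n) ℝ) :
    fip M (∑ i ∈ s, f i) = ∑ i ∈ s, fip M (f i) := by
  rw [fip_comm, fip_sum_left]
  exact Finset.sum_congr rfl fun i _ => fip_comm _ _

lemma fip_vecMulVec (v w : Fin n → ℝ) :
    fip (vecMulVec v v) (vecMulVec w w) = (∑ k, v k * w k) ^ 2 := by
  simp only [fip, vecMulVec_apply, sq, Finset.sum_mul_sum]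
  exact Finset.sum_congr rfl fun j _ => Finset.sum_congr rfl fun i _ => by ring

/-- eigen-projector -/
noncomputable def P {X : Matrix (Fin n) (Fin n) ℝ} (hX : X.IsHermitian) (i : Fin n) :
    Matrix (Fin n) (Fin n) ℝ :=
  Matrix.vecMulVec (fun j => hX.eigenvectorBasis i j) (fun j => hX.eigenvectorBasis i j)

lemma orth_basis {X : Matrix (Fin n) (Fin n) ℝ} (hX : X.IsHermitian) (i j : Fin n) :
    ∑ k, hX.eigenvectorBasis i k * hX.eigenvectorBasis j k = if i = j then 1 else 0 := by
  have h := orthonormal_iff_ite.mp hX.eigenvectorBasis.orthonormal i j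
  simpa [PiLp.inner_apply, RCLike.inner_apply, mul_comm] using h

lemma fip_P_same {X : Matrix (Fin n) (Fin n) ℝ} (hX : X.IsHermitian) (i j : Fin n) :
    fip (P hX i) (P hX j) = if i = j then 1 else 0 := by
  rw [P, P, fip_vecMulVec, orth_basis]
  split <;> norm_num

lemma fip_P_nonneg {X Y : Matrix (Fin n) (Fin n) ℝ} (hX : X.IsHermitian)
    (hY : Y.IsHermitian) (i j : Fin n) : 0 ≤ fip (P hX i) (P hY j) := by
  rw [P, P, fip_vecMulVec]
  positivity

lemma spectral_sum {X : Matrix (Fin n) (Fin n) ℝ} (hX : X.IsHermitian) :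
    ∑ i, hX.eigenvalues i • P hX i = X := by
  conv_rhs => rw [hX.spectral_theorem]
  ext a b
  simp [Matrix.sum_apply, P, vecMulVec_apply, Matrix.mul_apply, Matrix.diagonal,
    Matrix.conjTranspose_apply, Finset.sum_mul]
  exact Finset.sum_congr rfl fun i _ => by ring

lemma negPart_eq {X : Matrix (Fin n) (Fin n) ℝ} (hX : X.IsHermitian) :
    matNegPart X = ∑ i, (if hX.eigenvalues i < 0 then hX.eigenvalues i else 0) • P hX i := by
  rw [matNegPart, dif_pos hX]
  exact Finset.sum_congr rfl fun i _ => by split <;> simp [P]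

lemma posPart_eq {X : Matrix (Fin n) (Fin n) ℝ} (hX : X.IsHermitian) :
    matPosPart X = ∑ i, (if 0 < hX.eigenvalues i then hX.eigenvalues i else 0) • P hX i := by
  rw [matPosPart, dif_pos hX]
  exact Finset.sum_congr rfl fun i _ => by split <;> simp [P]

lemma pos_add_neg {X : Matrix (Fin n) (Fin n) ℝ} (hX : X.IsHermitian) :
    matPosPart X + matNegPart X = X := by
  rw [posPart_eq hX, negPart_eq hX, ← Finset.sum_add_distrib]
  refine Eq.trans (Finset.sum_congr rfl fun i _ => ?_) (spectral_sum hX)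
  rw [← add_smul]
  congr 1
  rcases lt_trichotomy (hX.eigenvalues i) 0 with h | h | h
  · simp [h, not_lt.mpr h.le]
  · simp [h]
  · simp [h, not_lt.mpr h.le]

lemma neg_sub_pos {X : Matrix (Fin n) (Fin n) ℝ} (hX : X.IsHermitian) :
    X - matPosPart X = matNegPart X :=
  sub_eq_iff_eq_add.mpr (by rw [add_comm]; exact (pos_add_neg hX).symm)

/-- ⟨X₊, X₋⟩ = 0. -/
lemma fip_pos_neg_self {X : Matrix (Fin n) (Fin n) ℝ} (hX : X.IsHermitian) :
    fip (matPosPart X) (matNegPart X) = 0 := by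
  rw [posPart_eq hX, negPart_eq hX, fip_sum_left]
  refine Finset.sum_eq_zero fun i _ => ?_
  rw [fip_smul_left, fip_sum_right]
  have hsum : ∑ j, fip (P hX i) ((if hX.eigenvalues j < 0 then hX.eigenvalues j else 0) • P hX j)
      = if hX.eigenvalues i < 0 then hX.eigenvalues i else 0 := by
    simp only [fip_smul_right, fip_P_same]
    rw [Finset.sum_eq_single i]
    · simp
    · intro j _ hj; simp [Ne.symm hj]
    · simp
  rw [hsum]
  by_cases h : 0 < hX.eigenvalues i
  · simp [not_lt.mpr h.le]
  · simp [h]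

/-- ⟨Y₊, X₋⟩ ≤ 0 for arbitrary Hermitian X, Y. -/
lemma fip_pos_neg_nonpos {X Y : Matrix (Fin n) (Fin n) ℝ} (hY : Y.IsHermitian)
    (hX : X.IsHermitian) : fip (matPosPart Y) (matNegPart X) ≤ 0 := by
  rw [posPart_eq hY, negPart_eq hX, fip_sum_left]
  refine Finset.sum_nonpos fun i _ => ?_
  rw [fip_smul_left, fip_sum_right]
  refine mul_nonpos_of_nonneg_of_nonpos ?_ ?_
  · split
    · exact le_of_lt ‹_›
    · exact le_rfl
  refine Finset.sum_nonpos fun j _ => ?_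
  rw [fip_smul_right]
  refine mul_nonpos_of_nonpos_of_nonneg ?_ (fip_P_nonneg hY hX i j)
  split
  · exact le_of_lt ‹_›
  · exact le_rfl

/-- Projection inequality. -/
lemma negPart_sq_le {X W : Matrix (Fin n) (Fin n) ℝ} (hX : X.IsHermitian)
    (hW : fip W (matNegPart X) ≤ 0) :
    fip (matNegPart X) (matNegPart X) ≤ fip (X - W) (X - W) := by
  have hdecomp : X - W = (matPosPart X - W) + matNegPart X := by
    rw [← neg_sub_pos hX]; abel
  rw [hdecomp]
  have expand : fip ((matPosPart X - W) + matNegPart X) ((matPosPart X - W) + matNegPart X)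
      = fip (matPosPart X - W) (matPosPart X - W)
        + 2 * fip (matPosPart X - W) (matNegPart X)
        + fip (matNegPart X) (matNegPart X) := by
    rw [fip_add_left, fip_add_right, fip_add_right, fip_comm (matNegPart X) (matPosPart X - W)]
    ring
  rw [expand]
  have h1 : 0 ≤ fip (matPosPart X - W) (matPosPart X - W) := fip_self_nonneg _
  have h2 : 0 ≤ fip (matPosPart X - W) (matNegPart X) := by
    rw [fip_sub_left, fip_pos_neg_self hX]
    linarith
  linarith

/-- Convexity of ‖·‖². -/
lemma fip_combo_le {a c : ℝ} (ha : 0 ≤ a) (hc : 0 ≤ c) (habc : a + c = 1)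
    (M N : Matrix (Fin n) (Fin n) ℝ) :
    fip (a • M + c • N) (a • M + c • N) ≤ a * fip M M + c * fip N N := by
  have hsymm : fip N M = fip M N := fip_comm N M
  have hMN : 2 * fip M N ≤ fip M M + fip N N := by
    have h := fip_self_nonneg (M - N)
    rw [fip_sub_left, fip_sub_right, fip_sub_right, hsymm] at h
    linarith
  have expand : fip (a • M + c • N) (a • M + c • N)
      = a ^ 2 * fip M M + 2 * (a * c) * fip M N + c ^ 2 * fip N N := by
    simp only [fip_add_left, fip_add_right, fip_smul_left, fip_smul_right, hsymm]
    ring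
  rw [expand]
  have hc' : c = 1 - a := by linarith
  subst hc'
  nlinarith [mul_le_mul_of_nonneg_left hMN (mul_nonneg ha hc)]

lemma herm_smul {M : Matrix (Fin n) (Fin n) ℝ} (h : M.IsHermitian) (c : ℝ) :
    (c • M).IsHermitian := by
  unfold Matrix.IsHermitian at *
  rw [Matrix.conjTranspose_smul, h]
  simp

/-- The core concavity inequality. -/
lemma negPart_q_convex {X Y : Matrix (Fin n) (Fin n) ℝ} (hX : X.IsHermitian)
    (hY : Y.IsHermitian) {a c : ℝ} (ha : 0 ≤ a) (hc : 0 ≤ c) (habc : a + c = 1) :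
    fip (matNegPart (a • X + c • Y)) (matNegPart (a • X + c • Y))
      ≤ a * fip (matNegPart X) (matNegPart X) + c * fip (matNegPart Y) (matNegPart Y) := by
  have hZ : (a • X + c • Y).IsHermitian := (herm_smul hX a).add (herm_smul hY c)
  set W : Matrix (Fin n) (Fin n) ℝ := a • matPosPart X + c • matPosPart Y with hWdef
  have hW : fip W (matNegPart (a • X + c • Y)) ≤ 0 := by
    rw [hWdef, fip_add_left, fip_smul_left, fip_smul_left]
    have h1 := fip_pos_neg_nonpos hX hZ
    have h2 := fip_pos_neg_nonpos hY hZ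
    nlinarith
  have key := negPart_sq_le hZ hW
  have hrw : a • X + c • Y - W = a • matNegPart X + c • matNegPart Y := by
    rw [hWdef, ← neg_sub_pos hX, ← neg_sub_pos hY, smul_sub, smul_sub]
    abel
  rw [hrw] at key
  exact key.trans (fip_combo_le ha hc habc _ _)

lemma herm_sum {m : ℕ} (f : Fin m → Matrix (Fin n) (Fin n) ℝ)
    (h : ∀ i, (f i).IsHermitian) : (∑ i, f i).IsHermitian := by
  unfold Matrix.IsHermitian at *
  rw [Matrix.conjTranspose_sum]
  exact Finset.sum_congr rfl fun i _ => h i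

end SDCutAux

open SDCutAux in
/-- the SDCut dual objective
g(u) = −(1/(4σ))‖C(u)₋‖_F² − uᵀb − ση², with C(u) = A + ∑ᵢ uᵢ Bᵢ affine in u and
A, B₁, …, B_m symmetric, is concave on ℝᵐ. -/
theorem sdcut_dual_objective_concave {n m : ℕ} (σ η : ℝ) (hσ : 0 < σ)
    (A : Matrix (Fin n) (Fin n) ℝ) (hA : A.IsHermitian)
    (B : Fin m → Matrix (Fin n) (Fin n) ℝ) (hB : ∀ i, (B i).IsHermitian)
    (b : Fin m → ℝ) :
    ConcaveOn ℝ Set.univ (fun u : Fin m → ℝ =>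
      -(1 / (4 * σ)) *
          Matrix.trace ((matNegPart (A + ∑ i, u i • B i))ᵀ * matNegPart (A + ∑ i, u i • B i)) -
        (∑ i, u i * b i) - σ * η ^ 2) := by
  refine ⟨convex_univ, fun u _ v _ a c ha hc habc => ?_⟩
  have hXuH : (A + ∑ i, u i • B i).IsHermitian :=
    hA.add (herm_sum _ fun i => herm_smul (hB i) _)
  have hXvH : (A + ∑ i, v i • B i).IsHermitian :=
    hA.add (herm_sum _ fun i => herm_smul (hB i) _)
  simp only [Pi.add_apply, Pi.smul_apply, smul_eq_mul]
  have hcomb : A + ∑ i, (a * u i + c * v i) • B i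
      = a • (A + ∑ i, u i • B i) + c • (A + ∑ i, v i • B i) := by
    rw [smul_add, smul_add]
    have h1 : a • A + c • A = A := by rw [← add_smul, habc, one_smul]
    rw [add_add_add_comm, h1, Finset.smul_sum, Finset.smul_sum, ← Finset.sum_add_distrib]
    congr 1
    refine Finset.sum_congr rfl fun i _ => ?_
    rw [add_smul, smul_smul, smul_smul]
  rw [hcomb]
  have key := negPart_q_convex hXuH hXvH ha hc habc
  simp only [fip_eq_trace]
  have hlin : ∑ i, (a * u i + c * v i) * b i
      = a * ∑ i, u i * b i + c * ∑ i, v i * b i := by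
    rw [Finset.mul_sum, Finset.mul_sum, ← Finset.sum_add_distrib]
    exact Finset.sum_congr rfl fun i _ => by ring
  rw [hlin]
  have hk : 0 < 1 / (4 * σ) := by positivity
  have ht : a * (σ * η ^ 2) + c * (σ * η ^ 2) = σ * η ^ 2 := by
    rw [← add_mul, habc, one_mul]
  linarith [mul_le_mul_of_nonneg_left key hk.le, ht]
end
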